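/- Let f = g·h where g(z) = ∏_{α ∈ C}(z−α) for a finite multiset C of size k ≥ 1 contained in the disc D(m_C, r_C) centered at the centroid m_C of C, and h is analytic with no roots among C. If z ∈ ℂ satisfies 4k(|z−m_C| + r_C)·γ(h,z) ≤ 1, then 1/2 < |f_k(z)/h(z)| < 3/2, where f_k(z) = f^{(k)}(z)/k!. -/

import Mathlib

open Complex Metric Polynomial Finset

def gammaSet (h : ℂ → ℂ) (z : ℂ) : Set ℝ :=
  {x | ∃ k : ℕ, 1 ≤ k ∧ x = ‖iteratedDeriv k h z / ((k.factorial : ℂ) * h z)‖ ^ ((1 : ℝ) / k)}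

lemma entire_diff_iter {f : ℂ → ℂ} (hf : Differentiable ℂ f) (i : ℕ) :
    Differentiable ℂ (iteratedDeriv i f) :=
  (hf.contDiff (n := ⊤)).differentiable_iteratedDeriv i (by simp)

lemma leibniz_iter (f g : ℂ → ℂ) (hf : Differentiable ℂ f) (hg : Differentiable ℂ g) (n : ℕ) :
    iteratedDeriv n (fun w => f w * g w) =
      fun z => ∑ i ∈ Finset.range (n+1),
        (n.choose i : ℂ) * (iteratedDeriv i f z * iteratedDeriv (n - i) g z) := by
  induction n with
  | zero => simp
  | succ n ih =>
    funext z
    rw [iteratedDeriv_succ, ih]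
    rw [deriv_fun_sum (fun i _ => by
      exact (((entire_diff_iter hf i).mul (entire_diff_iter hg (n - i))).const_mul _).differentiableAt)]
    have : ∀ i ∈ Finset.range (n+1),
        deriv (fun z => (n.choose i : ℂ) * (iteratedDeriv i f z * iteratedDeriv (n-i) g z)) z
        = (n.choose i : ℂ) * (iteratedDeriv (i+1) f z * iteratedDeriv (n-i) g z
            + iteratedDeriv i f z * iteratedDeriv (n-i+1) g z) := by
      intro i _
      rw [deriv_const_mul (d := fun z => iteratedDeriv i f z * iteratedDeriv (n - i) g z) _ (((entire_diff_iter hf i).mul (entire_diff_iter hg (n - i))).differentiableAt),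
        deriv_fun_mul ((entire_diff_iter hf i).differentiableAt) ((entire_diff_iter hg (n-i)).differentiableAt),
        ← iteratedDeriv_succ, ← iteratedDeriv_succ]
    rw [Finset.sum_congr rfl this]
    rw [Finset.sum_choose_succ_mul (fun i j => iteratedDeriv i f z * iteratedDeriv j g z) n]
    simp only [mul_add, Finset.sum_add_distrib]
    rw [add_comm]
    congr 1
    apply Finset.sum_congr rfl; intro i hi
    simp only [Finset.mem_range] at hi
    rw [show n - i + 1 = n + 1 - i by omega]

lemma iter_deriv_eval (p : ℂ[X]) (n : ℕ) :
    iteratedDeriv n (fun w => p.eval w) = fun w => (derivative^[n] p).eval w := by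
  induction n with
  | zero => simp
  | succ n ih =>
    funext z
    rw [iteratedDeriv_succ, ih, Function.iterate_succ_apply']
    exact Polynomial.deriv _

lemma iter_deriv_eval_eq (p : ℂ[X]) (n : ℕ) (z : ℂ) :
    iteratedDeriv n (fun w => p.eval w) z = (n.factorial : ℂ) * (taylor z p).coeff n := by
  rw [iter_deriv_eval, taylor_coeff, ← factorial_smul_hasseDeriv]
  simp [smul_smul]

lemma taylor_prod (C : Multiset ℂ) (z : ℂ) :
    taylor z ((C.map (fun α => X - Polynomial.C α)).prod)
      = ((C.map (fun α => z - α)).map (fun r => X + Polynomial.C r)).prod := by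
  rw [show (taylor z ((C.map (fun α => X - Polynomial.C α)).prod))
      = taylorAlgHom z ((C.map (fun α => X - Polynomial.C α)).prod) from rfl,
    map_multiset_prod, Multiset.map_map, Multiset.map_map]
  congr 1
  apply Multiset.map_congr rfl
  intro α _
  simp [taylorAlgHom_apply, taylor_apply, sub_comp]
  ring

lemma my_norm_prod_le (t : Multiset ℂ) (R : ℝ) (hR0 : 0 ≤ R) (h : ∀ x ∈ t, ‖x‖ ≤ R) :
    ‖t.prod‖ ≤ R ^ Multiset.card t := by
  induction t using Multiset.induction with
  | empty => simp
  | cons a t ih =>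
    rw [Multiset.prod_cons, Multiset.card_cons, norm_mul, pow_succ']
    exact mul_le_mul (h a (Multiset.mem_cons_self a t))
      (ih (fun x hx => h x (Multiset.mem_cons_of_mem hx))) (norm_nonneg _) hR0

lemma esymm_norm_le (s : Multiset ℂ) (R : ℝ) (hR : ∀ x ∈ s, ‖x‖ ≤ R) (hR0 : 0 ≤ R) (m : ℕ) :
    ‖s.esymm m‖ ≤ ((Multiset.card s).choose m : ℝ) * R ^ m := by
  rw [Multiset.esymm]
  calc ‖((s.powersetCard m).map Multiset.prod).sum‖
      ≤ (((s.powersetCard m).map Multiset.prod).map norm).sum := norm_multiset_sum_le _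
    _ ≤ (((s.powersetCard m).map (fun _ => R ^ m))).sum := by
        rw [Multiset.map_map]
        apply Multiset.sum_map_le_sum_map
        intro t ht
        rw [Multiset.mem_powersetCard] at ht
        rw [← ht.2]
        exact my_norm_prod_le t R hR0 (fun x hx => hR x (Multiset.mem_of_le ht.1 hx))
    _ = ((Multiset.card s).choose m : ℝ) * R ^ m := by
        rw [Multiset.map_const', Multiset.sum_replicate, Multiset.card_powersetCard]
        simp [nsmul_eq_mul]

theorem stmt2 (C : Multiset ℂ) (k : ℕ) (hk : 1 ≤ k) (hcard : Multiset.card C = k)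
    (mC : ℂ) (hmC : mC = C.sum / (k : ℂ))
    (rC : ℝ) (hrC : ∀ α ∈ C, ‖α - mC‖ ≤ rC)
    (h f : ℂ → ℂ) (hdiff : Differentiable ℂ h) (hroots : ∀ α ∈ C, h α ≠ 0)
    (hf : ∀ w, f w = (C.map (fun α => w - α)).prod * h w)
    (z : ℂ) (hz : h z ≠ 0) (γ : ℝ) (hγ : IsLUB (gammaSet h z) γ)
    (hcond : 4 * k * (‖z - mC‖ + rC) * γ ≤ 1) :
    1/2 < ‖(iteratedDeriv k f z / (k.factorial : ℂ)) / h z‖ ∧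
      ‖(iteratedDeriv k f z / (k.factorial : ℂ)) / h z‖ < 3/2 := by
  -- basic positivity facts
  obtain ⟨R, hR⟩ : ∃ R : ℝ, R = ‖z - mC‖ + rC := ⟨_, rfl⟩
  rw [← hR] at hcond
  have hCne : C ≠ 0 := by
    intro h0; rw [h0] at hcard; simp at hcard; omega
  obtain ⟨α₀, hα₀⟩ := Multiset.exists_mem_of_ne_zero hCne
  have hrC0 : 0 ≤ rC := le_trans (norm_nonneg _) (hrC α₀ hα₀)
  have hR0 : 0 ≤ R := hR ▸ add_nonneg (norm_nonneg _) hrC0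
  have hγ0 : 0 ≤ γ := by
    have hx : ‖iteratedDeriv 1 h z / ((Nat.factorial 1 : ℂ) * h z)‖ ^ ((1:ℝ)/(1:ℕ)) ∈ gammaSet h z :=
      ⟨1, le_refl 1, rfl⟩
    exact le_trans (Real.rpow_nonneg (norm_nonneg _) _) (hγ.1 hx)
  -- gamma bound on derivatives of h
  have hb : ∀ j : ℕ, 1 ≤ j → ‖iteratedDeriv j h z / ((j.factorial : ℂ) * h z)‖ ≤ γ ^ j := by
    intro j hj
    set x := ‖iteratedDeriv j h z / ((j.factorial : ℂ) * h z)‖ with hxdef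
    have hx0 : 0 ≤ x := norm_nonneg _
    have hmem : x ^ ((1:ℝ)/(j:ℕ)) ∈ gammaSet h z := ⟨j, hj, rfl⟩
    have h1 : x ^ ((1:ℝ)/(j:ℕ)) ≤ γ := hγ.1 hmem
    have h2 : (x ^ ((1:ℝ)/(j:ℕ))) ^ (j:ℕ) ≤ γ ^ j :=
      pow_le_pow_left₀ (Real.rpow_nonneg hx0 _) h1 j
    calc x = (x ^ ((1:ℝ)/(j:ℕ))) ^ (j:ℕ) := by
          rw [← Real.rpow_natCast (x ^ ((1:ℝ)/(j:ℕ))) j, ← Real.rpow_mul hx0,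
            one_div, inv_mul_cancel₀ (Nat.cast_ne_zero.mpr (by omega) : (j:ℝ) ≠ 0),
            Real.rpow_one]
      _ ≤ γ ^ j := h2
  -- the polynomial and its taylor coefficients
  set P : ℂ[X] := (C.map (fun α => X - Polynomial.C α)).prod with hP
  set g : ℂ → ℂ := fun w => (C.map (fun α => w - α)).prod with hgdef
  have hge : g = fun w => P.eval w := by
    funext w
    rw [hgdef, hP, eval_multiset_prod, Multiset.map_map]
    simp
  have hgdiff : Differentiable ℂ g := by
    rw [hge]; exact Polynomial.differentiable P
  set s : Multiset ℂ := C.map (fun α => z - α) with hs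
  have hscard : Multiset.card s = k := by rw [hs, Multiset.card_map, hcard]
  have hsmem : ∀ x ∈ s, ‖x‖ ≤ R := by
    intro x hx
    obtain ⟨α, hα, rfl⟩ := Multiset.mem_map.mp hx
    calc ‖z - α‖ = ‖(z - mC) + (mC - α)‖ := by rw [sub_add_sub_cancel]
      _ ≤ ‖z - mC‖ + ‖mC - α‖ := norm_add_le _ _
      _ ≤ ‖z - mC‖ + rC := by
          rw [norm_sub_rev mC α]; exact add_le_add le_rfl (hrC α hα)
      _ = R := hR.symm
  set a : ℕ → ℂ := fun i => (taylor z P).coeff i with ha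
  have hcoeff : ∀ i, i ≤ k → a i = s.esymm (k - i) := by
    intro i hik
    rw [ha, taylor_prod, ← hs]
    have := Multiset.prod_X_add_C_coeff s (k := i) (by rw [hscard]; exact hik)
    rw [hscard] at this
    exact this
  have hak : a k = 1 := by
    rw [hcoeff k le_rfl, Nat.sub_self, Multiset.esymm]
    simp
  have hanorm : ∀ i, i ≤ k → ‖a i‖ ≤ (k.choose (k - i) : ℝ) * R ^ (k - i) := by
    intro i hik
    rw [hcoeff i hik]
    have := esymm_norm_le s R hsmem hR0 (k - i)
    rwa [hscard] at this
  have hgderiv : ∀ i, iteratedDeriv i g z = (i.factorial : ℂ) * a i := by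
    intro i; rw [hge]; exact iter_deriv_eval_eq P i z
  -- Leibniz
  have hfg : f = fun w => g w * h w := by funext w; rw [hf w]
  have hlb : iteratedDeriv k f z = ∑ i ∈ Finset.range (k+1),
      (k.choose i : ℂ) * (iteratedDeriv i g z * iteratedDeriv (k - i) h z) := by
    rw [hfg, leibniz_iter g h hgdiff hdiff k]
  -- rewrite the target quantity
  set T : ℂ := (iteratedDeriv k f z / (k.factorial : ℂ)) / h z with hT
  have hTsum : T = ∑ i ∈ Finset.range (k+1),
      a i * (iteratedDeriv (k - i) h z / (((k - i).factorial : ℂ) * h z)) := by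
    rw [hT, hlb, Finset.sum_div, Finset.sum_div]
    apply Finset.sum_congr rfl
    intro i hi
    simp only [Finset.mem_range] at hi
    have hik : i ≤ k := by omega
    rw [hgderiv i]
    have hfact : (k.choose i : ℂ) * (i.factorial : ℂ) * ((k - i).factorial : ℂ)
        = (k.factorial : ℂ) := by
      have := Nat.choose_mul_factorial_mul_factorial hik
      exact_mod_cast congrArg (Nat.cast : ℕ → ℂ) this
    have hkf : (k.factorial : ℂ) ≠ 0 := by exact_mod_cast k.factorial_ne_zero
    have hkif : ((k - i).factorial : ℂ) ≠ 0 := by exact_mod_cast (k - i).factorial_ne_zero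
    field_simp
    linear_combination (a i * iteratedDeriv (k - i) h z) * hfact
  -- split the top term
  have hsplit : T = (∑ i ∈ Finset.range k,
      a i * (iteratedDeriv (k - i) h z / (((k - i).factorial : ℂ) * h z))) + 1 := by
    rw [hTsum, Finset.sum_range_succ, hak, Nat.sub_self]
    simp [iteratedDeriv_zero, hz]
  -- bound the sum
  have hbound : ‖T - 1‖ ≤ 1/3 := by
    rw [hsplit, add_sub_cancel_right]
    have hterm : ∀ i ∈ Finset.range k,
        ‖a i * (iteratedDeriv (k - i) h z / (((k - i).factorial : ℂ) * h z))‖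
          ≤ (1/4 : ℝ) ^ (k - i) := by
      intro i hi
      simp only [Finset.mem_range] at hi
      have hik : i ≤ k := le_of_lt hi
      have h1 : 1 ≤ k - i := by omega
      rw [norm_mul]
      have hA : ‖a i‖ ≤ (k.choose (k - i) : ℝ) * R ^ (k - i) := hanorm i hik
      have hB : ‖iteratedDeriv (k - i) h z / (((k - i).factorial : ℂ) * h z)‖ ≤ γ ^ (k - i) :=
        hb (k - i) h1
      calc ‖a i‖ * ‖iteratedDeriv (k - i) h z / (((k - i).factorial : ℂ) * h z)‖
          ≤ ((k.choose (k - i) : ℝ) * R ^ (k - i)) * γ ^ (k - i) :=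
            mul_le_mul hA hB (norm_nonneg _)
              (mul_nonneg (Nat.cast_nonneg _) (pow_nonneg hR0 _))
        _ ≤ ((k : ℝ) ^ (k - i) * R ^ (k - i)) * γ ^ (k - i) := by
            apply mul_le_mul_of_nonneg_right _ (pow_nonneg hγ0 _)
            apply mul_le_mul_of_nonneg_right _ (pow_nonneg hR0 _)
            calc (k.choose (k - i) : ℝ) ≤ (k : ℝ) ^ (k - i) / ((k-i).factorial : ℝ) :=
                  Nat.choose_le_pow_div (k - i) k
              _ ≤ (k : ℝ) ^ (k - i) := by
                  apply div_le_self (pow_nonneg (Nat.cast_nonneg _) _)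
                  exact_mod_cast Nat.one_le_iff_ne_zero.mpr (k-i).factorial_ne_zero
        _ = ((k : ℝ) * R * γ) ^ (k - i) := by rw [mul_pow, mul_pow]
        _ ≤ (1/4 : ℝ) ^ (k - i) := by
            apply pow_le_pow_left₀
              (mul_nonneg (mul_nonneg (Nat.cast_nonneg _) hR0) hγ0)
            nlinarith [hcond]
    calc ‖∑ i ∈ Finset.range k,
          a i * (iteratedDeriv (k - i) h z / (((k - i).factorial : ℂ) * h z))‖
        ≤ ∑ i ∈ Finset.range k, ‖a i * (iteratedDeriv (k - i) h z / (((k - i).factorial : ℂ) * h z))‖ :=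
          norm_sum_le _ _
      _ ≤ ∑ i ∈ Finset.range k, (1/4 : ℝ) ^ (k - i) := Finset.sum_le_sum hterm
      _ = ∑ j ∈ Finset.range k, (1/4 : ℝ) ^ (j + 1) := by
          rw [← Finset.sum_range_reflect]
          apply Finset.sum_congr rfl
          intro j hj
          simp only [Finset.mem_range] at hj
          congr 1
          omega
      _ = (1/4 : ℝ) * ∑ j ∈ Finset.range k, (1/4 : ℝ) ^ j := by
          rw [Finset.mul_sum]
          apply Finset.sum_congr rfl
          intro j _
          ring
      _ ≤ (1/4 : ℝ) * (4/3) := by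
          apply mul_le_mul_of_nonneg_left _ (by norm_num)
          rw [geom_sum_eq (by norm_num : (1/4 : ℝ) ≠ 1)]
          have h4 : (0:ℝ) ≤ (1/4 : ℝ) ^ k := by positivity
          rw [div_le_iff_of_neg (by norm_num : (1/4 : ℝ) - 1 < 0)]
          linarith
      _ = 1/3 := by norm_num
  have hn1 : ‖(1:ℂ)‖ = 1 := by simp
  have hup : ‖T‖ - ‖(1:ℂ)‖ ≤ ‖T - 1‖ := norm_sub_norm_le T 1
  have hlo : ‖(1:ℂ)‖ - ‖T‖ ≤ ‖T - 1‖ := by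
    rw [← norm_sub_rev]; exact norm_sub_norm_le 1 T
  constructor
  · rw [← hT] at *; linarith
  · rw [← hT] at *; linarith
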